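/- Let β : [0,∞) → ℝ be convex, let r ≥ 0 be an extremal point of β (i.e., β(r) < s·β(r₁) + (1-s)·β(r₂) whenever r₁ ≠ r₂, 0 < s < 1 and s·r₁ + (1-s)·r₂ = r). Let (E, λ) be a probability space and g : E → [0,∞) integrable with ∫ g dλ = r and β(∫ g dλ) = ∫ β∘g dλ. Then g = r λ-almost everywhere. -/

import Mathlib

open MeasureTheory

/-- Equality case in Jensen's inequality at an extremal point of a convex function:
if `β` is convex on `[0,∞)`, `r ≥ 0` is an extremal point of `β`, `g ≥ 0` is integrable on a
probability space with `∫ g dλ = r` and `β(∫ g dλ) = ∫ β ∘ g dλ`, then `g = r` a.e. -/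
theorem jensen_equality_extremal {E : Type*} [MeasurableSpace E] (lam : Measure E)
    [IsProbabilityMeasure lam] (β : ℝ → ℝ) (hβ : ConvexOn ℝ (Set.Ici 0) β)
    (r : ℝ) (hr : 0 ≤ r)
    (hext : ∀ r₁ r₂ s : ℝ, 0 ≤ r₁ → 0 ≤ r₂ → r₁ ≠ r₂ → 0 < s → s < 1 →
      s * r₁ + (1 - s) * r₂ = r → β r < s * β r₁ + (1 - s) * β r₂)
    (g : E → ℝ) (hg : ∀ x, 0 ≤ g x) (hgint : Integrable g lam)
    (hβgint : Integrable (fun x => β (g x)) lam)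
    (hmean : ∫ x, g x ∂lam = r)
    (hjensen : β (∫ x, g x ∂lam) = ∫ x, β (g x) ∂lam) :
    ∀ᵐ x ∂lam, g x = r := by
  rcases eq_or_lt_of_le hr with hr0 | hrpos
  · -- r = 0 : g ≥ 0 with integral 0
    subst hr0
    have := (integral_eq_zero_iff_of_nonneg hg hgint).mp hmean
    filter_upwards [this] with x hx using hx
  -- r > 0 : construct a subgradient c of β at r
  set S : Set ℝ := (fun y => (β r - β y) / (r - y)) '' Set.Ico 0 r with hS
  have hSne : S.Nonempty := ⟨_, ⟨0, ⟨le_refl 0, hrpos⟩, rfl⟩⟩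
  have hslope : ∀ a ∈ Set.Ico 0 r, ∀ b, r < b →
      (β r - β a) / (r - a) ≤ (β b - β r) / (b - r) := by
    intro a ha b hb
    exact hβ.slope_mono_adjacent ha.1 (hr.trans hb.le) ha.2 hb
  have hSbdd : BddAbove S := by
    refine ⟨(β (r + 1) - β r) / (r + 1 - r), ?_⟩
    rintro _ ⟨a, ha, rfl⟩
    exact hslope a ha (r + 1) (by linarith)
  set c : ℝ := sSup S with hc
  have hcle : ∀ a ∈ Set.Ico 0 r, (β r - β a) / (r - a) ≤ c :=
    fun a ha => le_csSup hSbdd ⟨a, ha, rfl⟩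
  have hcge : ∀ b, r < b → c ≤ (β b - β r) / (b - r) := by
    intro b hb
    exact csSup_le hSne (by rintro _ ⟨a, ha, rfl⟩; exact hslope a ha b hb)
  -- subgradient inequality
  have hsub : ∀ y, 0 ≤ y → β r + c * (y - r) ≤ β y := by
    intro y hy
    rcases lt_trichotomy y r with h | h | h
    · have h1 := hcle y ⟨hy, h⟩
      have h2 : (0:ℝ) < r - y := by linarith
      rw [div_le_iff₀ h2] at h1
      nlinarith
    · simp [h]
    · have h1 := hcge y h
      have h2 : (0:ℝ) < y - r := by linarith
      rw [le_div_iff₀ h2] at h1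
      nlinarith
  -- φ ∘ g has integral 0 and is nonneg, hence φ ∘ g = 0 a.e.
  set φ : ℝ → ℝ := fun y => β y - β r - c * (y - r) with hφ
  have hφint : Integrable (fun x => φ (g x)) lam := by
    apply Integrable.sub (hβgint.sub (integrable_const _))
    exact (hgint.sub (integrable_const _)).const_mul c
  have i1 : Integrable (fun x => β (g x) - β r) lam := hβgint.sub (integrable_const _)
  have i2 : Integrable (fun x => c * (g x - r)) lam :=
    (hgint.sub (integrable_const _)).const_mul c
  have i3 : Integrable (fun x => g x - r) lam := hgint.sub (integrable_const _)
  have hφintval : ∫ x, φ (g x) ∂lam = 0 := by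
    have h1 : ∫ x, φ (g x) ∂lam
        = (∫ x, β (g x) - β r ∂lam) - ∫ x, c * (g x - r) ∂lam := integral_sub i1 i2
    have h2 : ∫ x, β (g x) - β r ∂lam = (∫ x, β (g x) ∂lam) - β r := by
      rw [integral_sub hβgint (integrable_const _)]; simp
    have h3 : ∫ x, c * (g x - r) ∂lam = c * ((∫ x, g x ∂lam) - r) := by
      rw [integral_const_mul, integral_sub hgint (integrable_const _)]; simp
    rw [h1, h2, h3, hmean, ← hjensen, hmean]
    ring
  have hφ0 : ∀ᵐ x ∂lam, φ (g x) = 0 := by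
    have hnn : 0 ≤ᵐ[lam] fun x => φ (g x) :=
      Filter.Eventually.of_forall fun x => by
        have := hsub (g x) (hg x); simp only [Pi.zero_apply, hφ]; linarith
    have := (integral_eq_zero_iff_of_nonneg_ae hnn hφint).mp hφintval
    filter_upwards [this] with x hx using hx
  -- the contact set lies on one side of r
  have key : (∀ a, 0 ≤ a → a < r → φ a ≠ 0) ∨ (∀ b, r < b → φ b ≠ 0) := by
    by_contra h
    push_neg at h
    obtain ⟨⟨a, ha0, har, hφa⟩, ⟨b, hbr, hφb⟩⟩ := h
    have hab : a < b := har.trans hbr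
    set s : ℝ := (r - a) / (b - a) with hs
    have hba : (0:ℝ) < b - a := by linarith
    have hs0 : 0 < s := div_pos (by linarith) hba
    have hs1 : s < 1 := (div_lt_one hba).mpr (by linarith)
    have hsum : s * b + (1 - s) * a = r := by
      field_simp [hs]
      have hsba : s * (b - a) = r - a := by rw [hs]; exact div_mul_cancel₀ _ hba.ne'
      linear_combination hsba
    have hlt := hext b a s (hr.trans hbr.le) ha0 (by linarith [har.trans hbr] : b ≠ a) hs0 hs1 hsum
    have hβa : β a = β r + c * (a - r) := by simp only [hφ] at hφa; linarith
    have hβb : β b = β r + c * (b - r) := by simp only [hφ] at hφb; linarith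
    rw [hβa, hβb] at hlt
    have : s * (β r + c * (b - r)) + (1 - s) * (β r + c * (a - r))
        = β r + c * ((s * b + (1 - s) * a) - r) := by ring
    rw [this, hsum] at hlt
    simp at hlt
  rcases key with hside | hside
  · -- g ≥ r a.e., and ∫ (g - r) = 0
    have hge : ∀ᵐ x ∂lam, r ≤ g x := by
      filter_upwards [hφ0] with x hx
      by_contra hlt
      push_neg at hlt
      exact hside (g x) (hg x) hlt hx
    have hint0 : ∫ x, g x - r ∂lam = 0 := by
      rw [integral_sub hgint (integrable_const _), hmean]
      simp
    have hnn : 0 ≤ᵐ[lam] fun x => g x - r := by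
      filter_upwards [hge] with x hx; simp only [Pi.zero_apply]; linarith
    have := (integral_eq_zero_iff_of_nonneg_ae hnn
      (hgint.sub (integrable_const _))).mp hint0
    filter_upwards [this] with x hx
    have : g x - r = 0 := hx
    linarith
  · -- g ≤ r a.e., and ∫ (r - g) = 0
    have hle : ∀ᵐ x ∂lam, g x ≤ r := by
      filter_upwards [hφ0] with x hx
      by_contra hlt
      push_neg at hlt
      exact hside (g x) hlt hx
    have hint0 : ∫ x, r - g x ∂lam = 0 := by
      rw [integral_sub (integrable_const _) hgint, hmean]
      simp
    have hnn : 0 ≤ᵐ[lam] fun x => r - g x := by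
      filter_upwards [hle] with x hx; simp only [Pi.zero_apply]; linarith
    have := (integral_eq_zero_iff_of_nonneg_ae hnn
      ((integrable_const _).sub hgint)).mp hint0
    filter_upwards [this] with x hx
    have : r - g x = 0 := hx
    linarith
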